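/- Let p ∈ (0,1), q = 1/p, λ > 0, and define w_λ(m,u) = C · u^{λ−1} / (−u(p^{−λ}−1)/m ; p)_∞ · m^{−λ} where C is a constant independent of m, u, and (x;p)_∞ = ∏_{k≥0}(1 − x p^k). Then the q-derivative in m satisfies D_{q,m} w_λ(m,u) = (p(1−p^λ)/((1−p)m²)) · w_λ(m,u) · (u − m), where D_{q,m} f(m) = (f(m) − f(qm))/((1−q)m). -/

import Mathlib

lemma aux_mult (p c : ℝ) (hp : 0 < p) (hp1 : p < 1) (hc : 0 ≤ c) :
    Multipliable (fun k : ℕ => 1 + c * p ^ k) := by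
  have := Real.multipliable_of_summable_log (f := fun k : ℕ => 1 + c * p ^ k) ?_ ?_
  · exact this
  · intro k
    positivity
  · show Summable fun k : ℕ => Real.log (1 + c * p ^ k)
    refine Summable.of_nonneg_of_le ?_ ?_
      ((summable_geometric_of_lt_one hp.le hp1).mul_left c)
    · intro k
      apply Real.log_nonneg
      nlinarith [pow_pos hp k, mul_nonneg hc (pow_pos hp k).le]
    · intro k
      have h1 : (0:ℝ) < 1 + c * p ^ k := by positivity
      have := Real.log_le_sub_one_of_pos h1
      linarith

lemma aux_shift (p c : ℝ) (hp : 0 < p) (hp1 : p < 1) (hc : 0 ≤ c) :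
    (∏' k : ℕ, (1 + c * p ^ k))
      = (1 + c) * ∏' k : ℕ, (1 + (c * p) * p ^ k) := by
  have heq : (fun n : ℕ => 1 + c * p ^ (n + 1)) = fun n : ℕ => 1 + (c * p) * p ^ n := by
    funext n; ring
  rw [tprod_eq_zero_mul' (f := fun k : ℕ => 1 + c * p ^ k)
      (by rw [heq]; exact aux_mult p (c * p) hp hp1 (by positivity)),
    pow_zero, mul_one, heq]

lemma aux_pos (p c : ℝ) (hp : 0 < p) (hp1 : p < 1) (hc : 0 ≤ c) :
    0 < ∏' k : ℕ, (1 + c * p ^ k) := by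
  have hpos : ∀ (x : Unit) (k : ℕ), (0:ℝ) < (fun (k : ℕ) (_ : Unit) => 1 + c * p ^ k) k x := by
    intro _ k; positivity
  have hsum : ∀ _ : Unit, Summable fun k : ℕ => Real.log (1 + c * p ^ k) := by
    intro _
    refine Summable.of_nonneg_of_le ?_ ?_
      ((summable_geometric_of_lt_one hp.le hp1).mul_left c)
    · intro k
      apply Real.log_nonneg
      nlinarith [pow_pos hp k, mul_nonneg hc (pow_pos hp k).le]
    · intro k
      have h1 : (0:ℝ) < 1 + c * p ^ k := by positivity
      have := Real.log_le_sub_one_of_pos h1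
      linarith
  have h := Real.rexp_tsum_eq_tprod (f := fun k : ℕ => 1 + c * p ^ k) (hpos ()) (hsum ())
  have h2 := h
  rw [← h2]
  exact Real.exp_pos _

/-- For `0 < p < 1`, `q = 1/p`, `λ > 0`, the density
`w_λ(m,u) = C u^{λ−1} m^{−λ} / (−u(p^{−λ}−1)/m ; p)_∞` satisfies the
`q`-difference equation
`D_{q,m} w_λ(m,u) = (p(1−p^λ)/((1−p)m²)) w_λ(m,u) (u − m)`, where
`D_{q,m} f(m) = (f(m) − f(qm))/((1−q)m)` and
`(x;p)_∞ = ∏_{k≥0}(1 − x p^k)`. -/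
theorem stmt_18 (p lam Cc m u : ℝ) (hp : 0 < p) (hp1 : p < 1)
    (hlam : 0 < lam) (hC : 0 < Cc) (hm : 0 < m) (hu : 0 < u)
    (w : ℝ → ℝ → ℝ)
    (hw : ∀ m' : ℝ, 0 < m' →
      w m' u = Cc * u ^ (lam - 1) * m' ^ (-lam) /
        ∏' k : ℕ, (1 - (-(u * (p ^ (-lam) - 1) / m')) * p ^ (k : ℕ))) :
    (w m u - w ((1 / p) * m) u) / ((1 - 1 / p) * m)
      = (p * (1 - p ^ lam) / ((1 - p) * m ^ 2)) * w m u * (u - m) := by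
  have hs : (0:ℝ) < p ^ lam := Real.rpow_pos_of_pos hp lam
  have hs1 : p ^ lam < 1 := Real.rpow_lt_one hp.le hp1 hlam
  have hinv : p ^ (-lam) = (p ^ lam)⁻¹ := Real.rpow_neg hp.le lam
  have hgt1 : 1 < p ^ (-lam) := by
    rw [hinv]
    exact (one_lt_inv₀ hs).mpr hs1
  set c : ℝ := u * (p ^ (-lam) - 1) / m with hc_def
  clear_value c
  have hc : 0 < c := by
    rw [hc_def]
    apply div_pos _ hm
    exact mul_pos hu (by linarith)
  have hmne : m ≠ 0 := hm.ne'
  have hpne : p ≠ 0 := hp.ne'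
  have h1p : (1:ℝ) - p ≠ 0 := by linarith
  -- the two products
  have hprod1 : (fun k : ℕ => 1 - (-(u * (p ^ (-lam) - 1) / m)) * p ^ k)
      = fun k : ℕ => 1 + c * p ^ k := by
    funext k; rw [hc_def]; ring
  have hm' : 0 < (1 / p) * m := by positivity
  have harg : ∀ k : ℕ, 1 - (-(u * (p ^ (-lam) - 1) / ((1/p) * m))) * p ^ k
      = 1 + (c * p) * p ^ k := by
    intro k
    have : u * (p ^ (-lam) - 1) / ((1 / p) * m) = c * p := by
      rw [hc_def]; field_simp
    rw [this]; ring
  have hshift : (∏' k : ℕ, (1 + c * p ^ k))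
      = (1 + c) * ∏' k : ℕ, (1 + (c * p) * p ^ k) :=
    aux_shift p c hp hp1 hc.le
  set P : ℝ := ∏' k : ℕ, (1 + (c * p) * p ^ k) with hP_def
  have hP : 0 < P := by
    rw [hP_def]
    exact aux_pos p (c * p) hp hp1 (by positivity)
  have h1c : (0:ℝ) < 1 + c := by linarith
  -- rpow of (1/p)*m
  have hpow : ((1 / p) * m) ^ (-lam) = p ^ lam * m ^ (-lam) := by
    rw [Real.mul_rpow (by positivity) hm.le, one_div, Real.inv_rpow hp.le, hinv, inv_inv]
  have hw1 := hw m hm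
  have hw2 := hw ((1/p) * m) hm'
  rw [hprod1, hshift] at hw1
  rw [tprod_congr harg] at hw2
  rw [← hP_def] at hw2
  rw [hpow] at hw2
  -- relation between w at m and at m/p
  have hw2' : w ((1/p) * m) u = p ^ lam * (1 + c) * w m u := by
    rw [hw1, hw2]
    field_simp
  have hsc : p ^ lam * c = u * (1 - p ^ lam) / m := by
    rw [hc_def, hinv]
    field_simp
  have hdiff : w m u - w ((1/p) * m) u
      = w m u * ((1 - p ^ lam) * (m - u) / m) := by
    rw [hw2']
    have hkey : (1:ℝ) - p ^ lam * (1 + c) = (1 - p ^ lam) * (m - u) / m := by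
      have h : p ^ lam * (1 + c) = p ^ lam + u * (1 - p ^ lam) / m := by
        rw [mul_add, mul_one, hsc]
      rw [h]
      field_simp
      ring
    calc w m u - p ^ lam * (1 + c) * w m u
        = w m u * (1 - p ^ lam * (1 + c)) := by ring
      _ = w m u * ((1 - p ^ lam) * (m - u) / m) := by rw [hkey]
  rw [hdiff]
  have hq : (1:ℝ) - 1 / p ≠ 0 := by
    have : 1 < 1 / p := by
      rw [lt_div_iff₀ hp]; linarith
    intro h; linarith [sub_eq_zero.mp h]
  rw [div_eq_iff (mul_ne_zero hq hmne)]
  field_simp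
  ring
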